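/- Suppose (U_n) is a linear recurrence sequence of integers of order k ≥ 2 having a dominant root α₁, let a, b be positive integers and ε > 0. Then there exist (effectively computable) constants c₇ and c₈, depending only on ε, γ, r, k, a, b, such that for every solution (n, m, z₁,…,z_r) with n ≥ m ≥ 0, z₁,…,z_r ∈ 𝒰_S, aU_n + bU_m = z₁ + ⋯ + z_r, and |z_i|^{1+ε} ≤ |z_r| for all 1 ≤ i ≤ r−1, one has log|z_r| < c₇·n + c₈. -/

import Mathlib

open scoped BigOperators

/-- `z` is an `S`-unit for the finite set of primes `p 0, …, p (L-1)`:
`z = ± p₁^{e₁} ⋯ p_L^{e_L}` with nonnegative integer exponents. -/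
def IsSUnit {L : ℕ} (p : Fin L → ℕ) (z : ℤ) : Prop :=
  ∃ (e : Fin L → ℕ) (s : ℤ), (s = 1 ∨ s = -1) ∧ z = s * ∏ i, (p i : ℤ) ^ e i

lemma isSUnit_abs_pos {L : ℕ} {p : Fin L → ℕ} (hp : ∀ i, (p i).Prime) {z : ℤ}
    (h : IsSUnit p z) : 1 ≤ |z| := by
  obtain ⟨e, s, hs, rfl⟩ := h
  have hprod : 0 < ∏ i, (p i : ℤ) ^ e i := by
    apply Finset.prod_pos
    intro i _
    exact pow_pos (by exact_mod_cast (hp i).pos) _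
  rcases hs with rfl | rfl
  · simpa [abs_of_pos hprod] using Int.add_one_le_of_lt hprod
  · rw [abs_mul]
    simpa [abs_of_pos hprod] using Int.add_one_le_of_lt hprod

set_option maxHeartbeats 1000000 in
theorem log_zr_upper_bound
    (k t : ℕ) (hk : 2 ≤ k) (ht : 0 < t)
    (c : Fin k → ℤ) (hck : c ⟨k - 1, by omega⟩ ≠ 0)
    (U : ℕ → ℤ)
    (hrec : ∀ n : ℕ, U (n + k) = ∑ i : Fin k, c i * U (n + k - 1 - (i : ℕ)))
    (hinit : ∃ j : Fin k, U (j : ℕ) ≠ 0)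
    (α : Fin t → ℂ) (hα : Function.Injective α)
    (mult : Fin t → ℕ) (hmult : ∀ i, 0 < mult i)
    (hchar : (Polynomial.X ^ k -
        ∑ i : Fin k, Polynomial.C ((c i : ℂ)) * Polynomial.X ^ (k - 1 - (i : ℕ)))
      = ∏ i : Fin t, (Polynomial.X - Polynomial.C (α i)) ^ (mult i))
    (f : Fin t → Polynomial ℂ) (hf0 : ∀ i, f i ≠ 0)
    (hfdeg : ∀ i, (f i).natDegree < mult i)
    (hrep : ∀ n : ℕ, (U n : ℂ) = ∑ i : Fin t, (f i).eval (n : ℂ) * α i ^ n)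
    (A : ℝ) (hA : (A : ℂ) = α ⟨0, ht⟩) (hA1 : 1 < A)
    (hdom : ∀ j : Fin t, j ≠ ⟨0, ht⟩ → ‖α j‖ < A)
    (L : ℕ) (p : Fin L → ℕ) (hp : ∀ i, (p i).Prime) (hpinj : Function.Injective p)
    (a b : ℕ) (ha : 0 < a) (hb : 0 < b)
    (ε : ℝ) (hε : 0 < ε) (r : ℕ) (hr : 1 ≤ r) :
    ∃ c₇ c₈ : ℝ, ∀ (n m : ℕ) (z : Fin r → ℤ),
      m ≤ n →
      (∀ i, IsSUnit p (z i)) →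
      ((a : ℤ) * U n + (b : ℤ) * U m = ∑ i, z i) →
      (∀ i : Fin r, (i : ℕ) < r - 1 →
        ((|z i| : ℝ)) ^ (1 + ε) ≤ ((|z ⟨r - 1, by omega⟩| : ℝ))) →
      Real.log ((|z ⟨r - 1, by omega⟩| : ℝ)) < c₇ * n + c₈ := by
  -- growth bound for U
  set B : ℤ := 1 + ∑ i : Fin k, |c i| with hB
  set G : ℤ := (((Finset.range k).sup (fun j => (U j).natAbs) : ℕ) : ℤ) with hG
  have hB1 : (1 : ℤ) ≤ B := by
    have : (0 : ℤ) ≤ ∑ i : Fin k, |c i| :=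
      Finset.sum_nonneg fun i _ => abs_nonneg _
    omega
  have hG1 : (1 : ℤ) ≤ G := by
    obtain ⟨j, hj⟩ := hinit
    have h1 : 1 ≤ (U (j : ℕ)).natAbs := by
      rcases Nat.eq_zero_or_pos (U (j : ℕ)).natAbs with h | h
      · exact absurd (Int.natAbs_eq_zero.mp h) hj
      · exact h
    have h2 : (U (j : ℕ)).natAbs ≤ (Finset.range k).sup (fun j => (U j).natAbs) :=
      Finset.le_sup (f := fun j => (U j).natAbs) (Finset.mem_range.mpr j.isLt)
    rw [hG]; exact_mod_cast h1.trans h2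
  have key : ∀ n, |U n| ≤ G * B ^ n := by
    intro n
    induction n using Nat.strong_induction_on with
    | _ n ih =>
      rcases lt_or_ge n k with h | h
      · have h1 : (U n).natAbs ≤ (Finset.range k).sup (fun j => (U j).natAbs) :=
          Finset.le_sup (f := fun j => (U j).natAbs) (Finset.mem_range.mpr h)
        have h2 : |U n| ≤ G := by
          rw [Int.abs_eq_natAbs, hG]; exact_mod_cast h1
        calc |U n| ≤ G := h2
          _ ≤ G * B ^ n := le_mul_of_one_le_right (by linarith) (one_le_pow₀ hB1)
      · obtain ⟨j, rfl⟩ : ∃ j, n = j + k := ⟨n - k, by omega⟩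
        rw [hrec j]
        have step : ∀ i : Fin k, |U (j + k - 1 - (i : ℕ))| ≤ G * B ^ (j + k - 1) := by
          intro i
          have hlt : j + k - 1 - (i : ℕ) < j + k := by omega
          have := ih _ hlt
          refine this.trans ?_
          have := pow_le_pow_right₀ hB1 (show j + k - 1 - (i : ℕ) ≤ j + k - 1 by omega)
          nlinarith [pow_pos (show (0:ℤ) < B by linarith) (j + k - 1 - (i : ℕ))]
        calc |∑ i : Fin k, c i * U (j + k - 1 - (i : ℕ))|
            ≤ ∑ i : Fin k, |c i * U (j + k - 1 - (i : ℕ))| :=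
              Finset.abs_sum_le_sum_abs _ _
          _ = ∑ i : Fin k, |c i| * |U (j + k - 1 - (i : ℕ))| := by
              simp [abs_mul]
          _ ≤ ∑ i : Fin k, |c i| * (G * B ^ (j + k - 1)) := by
              refine Finset.sum_le_sum fun i _ => ?_
              exact mul_le_mul_of_nonneg_left (step i) (abs_nonneg _)
          _ = (∑ i : Fin k, |c i|) * (G * B ^ (j + k - 1)) := by
              rw [Finset.sum_mul]
          _ ≤ B * (G * B ^ (j + k - 1)) := by
              have hpos : (0 : ℤ) ≤ G * B ^ (j + k - 1) :=
                mul_nonneg (by linarith)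
                  (pow_nonneg (by linarith) _)
              have : (∑ i : Fin k, |c i|) ≤ B := by rw [hB]; linarith
              exact mul_le_mul_of_nonneg_right this hpos
          _ = G * B ^ (j + k - 1 + 1) := by ring
          _ = G * B ^ (j + k) := by rw [show j + k - 1 + 1 = j + k by omega]
  -- constants
  refine ⟨Real.log (B : ℝ),
    Real.log (2 * (a + b) * (G : ℝ)) + ((1 + ε) / ε) * Real.log (2 * r) + 1, ?_⟩
  intro n m z hmn hSU hrep2 hsmall
  set zr : ℤ := z ⟨r - 1, by omega⟩ with hzr
  set X : ℝ := (|zr| : ℝ) with hX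
  have hX1 : (1 : ℝ) ≤ X := by
    have := isSUnit_abs_pos hp (hSU ⟨r - 1, by omega⟩)
    rw [hX, hzr]; exact_mod_cast this
  have hX0 : (0 : ℝ) < X := by linarith
  -- nonneg facts for constants
  have hBR : (1 : ℝ) ≤ (B : ℝ) := by exact_mod_cast hB1
  have hGR : (1 : ℝ) ≤ (G : ℝ) := by exact_mod_cast hG1
  have hab : (1 : ℝ) ≤ (a : ℝ) + (b : ℝ) := by
    have : (1 : ℕ) ≤ a + b := by omega
    push_cast; exact_mod_cast this
  have hlogB : 0 ≤ Real.log (B : ℝ) := Real.log_nonneg hBR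
  have hlogM : 0 ≤ Real.log (2 * (a + b) * (G : ℝ)) :=
    Real.log_nonneg (by nlinarith)
  have hlog2r : 0 ≤ Real.log (2 * r) := by
    apply Real.log_nonneg
    have : (1 : ℝ) ≤ (r : ℝ) := by exact_mod_cast hr
    linarith
  have hεfrac : 0 < (1 + ε) / ε := by positivity
  have hc7n : 0 ≤ Real.log (B : ℝ) * n := by positivity
  -- bound on |S|
  have hSbound : |(a : ℤ) * U n + (b : ℤ) * U m| ≤ (a + b) * (G * B ^ n) := by
    have h1 := key n
    have h2 := key m
    have h3 : |U m| ≤ G * B ^ n := by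
      refine h2.trans ?_
      have := pow_le_pow_right₀ hB1 hmn
      nlinarith
    calc |(a : ℤ) * U n + (b : ℤ) * U m| ≤ |(a : ℤ) * U n| + |(b : ℤ) * U m| :=
          abs_add_le _ _
      _ = (a : ℤ) * |U n| + (b : ℤ) * |U m| := by
          rw [abs_mul, abs_mul]
          simp [abs_of_nonneg (show (0:ℤ) ≤ (a:ℤ) by positivity),
            abs_of_nonneg (show (0:ℤ) ≤ (b:ℤ) by positivity)]
      _ ≤ (a : ℤ) * (G * B ^ n) + (b : ℤ) * (G * B ^ n) := by
          have hGB : (0:ℤ) ≤ G * B ^ n := by positivity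
          have ha' : (0:ℤ) ≤ (a:ℤ) := by positivity
          have hb' : (0:ℤ) ≤ (b:ℤ) := by positivity
          exact add_le_add (mul_le_mul_of_nonneg_left h1 ha')
            (mul_le_mul_of_nonneg_left h3 hb')
      _ = (a + b) * (G * B ^ n) := by ring
  -- case split
  by_cases hcase : X ^ (ε / (1 + ε)) < 2 * r
  · -- small case
    have hXlt : X < (2 * r) ^ ((1 + ε) / ε) := by
      have h1 : (X ^ (ε / (1 + ε))) ^ ((1 + ε) / ε) < (2 * r) ^ ((1 + ε) / ε) :=
        Real.rpow_lt_rpow (Real.rpow_nonneg hX0.le _) hcase hεfrac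
      rwa [← Real.rpow_mul hX0.le, div_mul_div_comm, mul_comm ε (1 + ε),
        div_self (by positivity), Real.rpow_one] at h1
    have hlog : Real.log X < ((1 + ε) / ε) * Real.log (2 * r) := by
      have := Real.log_lt_log hX0 hXlt
      rwa [Real.log_rpow (by positivity)] at this
    calc Real.log X < ((1 + ε) / ε) * Real.log (2 * r) := hlog
      _ ≤ Real.log (B : ℝ) * n +
          (Real.log (2 * (a + b) * (G : ℝ)) + ((1 + ε) / ε) * Real.log (2 * r) + 1) := by
        linarith
  · -- large case: each small term at most X / (2r)-ish
    push_neg at hcase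
    have hsum : X ≤ ((a : ℝ) + b) * ((G : ℝ) * (B : ℝ) ^ n) + (r - 1) * X ^ (1 / (1 + ε)) := by
      have hmem : (⟨r - 1, by omega⟩ : Fin r) ∈ Finset.univ := Finset.mem_univ _
      have hsplit : (a : ℤ) * U n + (b : ℤ) * U m = zr +
          ∑ i ∈ Finset.univ.erase (⟨r - 1, by omega⟩ : Fin r), z i := by
        rw [hrep2, hzr]
        exact (Finset.add_sum_erase _ z hmem).symm
      have habs : |zr| ≤ |(a : ℤ) * U n + (b : ℤ) * U m| +
          ∑ i ∈ Finset.univ.erase (⟨r - 1, by omega⟩ : Fin r), |z i| := by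
        have h1 : zr = ((a : ℤ) * U n + (b : ℤ) * U m) -
            ∑ i ∈ Finset.univ.erase (⟨r - 1, by omega⟩ : Fin r), z i := by
          linarith [hsplit]
        rw [h1]
        refine (abs_sub _ _).trans ?_
        gcongr
        exact Finset.abs_sum_le_sum_abs _ _
      have hterm : ∀ i ∈ Finset.univ.erase (⟨r - 1, by omega⟩ : Fin r),
          ((|z i| : ℝ)) ≤ X ^ (1 / (1 + ε)) := by
        intro i hi
        have hne := Finset.ne_of_mem_erase hi
        have hilt : (i : ℕ) < r - 1 := by
          have := i.isLt
          rcases lt_or_ge (i : ℕ) (r - 1) with h | h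
          · exact h
          · exact absurd (Fin.ext (show (i : ℕ) = r - 1 by omega)) hne
        have hY := hsmall i hilt
        have hY0 : (0 : ℝ) ≤ ((|z i| : ℝ)) := by positivity
        have h1 : (((|z i| : ℝ)) ^ (1 + ε)) ^ (1 / (1 + ε)) ≤ X ^ (1 / (1 + ε)) :=
          Real.rpow_le_rpow (Real.rpow_nonneg hY0 _) hY (by positivity)
        rwa [← Real.rpow_mul hY0, mul_one_div, div_self (by positivity),
          Real.rpow_one] at h1
      have hsum2 : ∑ i ∈ Finset.univ.erase (⟨r - 1, by omega⟩ : Fin r), ((|z i| : ℝ))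
          ≤ (r - 1) * X ^ (1 / (1 + ε)) := by
        have hcard : (Finset.univ.erase (⟨r - 1, by omega⟩ : Fin r)).card = r - 1 := by
          rw [Finset.card_erase_of_mem hmem, Finset.card_univ, Fintype.card_fin]
        calc ∑ i ∈ Finset.univ.erase (⟨r - 1, by omega⟩ : Fin r), ((|z i| : ℝ))
            ≤ ∑ _i ∈ Finset.univ.erase (⟨r - 1, by omega⟩ : Fin r), X ^ (1 / (1 + ε)) :=
              Finset.sum_le_sum hterm
          _ = (r - 1 : ℕ) * X ^ (1 / (1 + ε)) := by rw [Finset.sum_const, hcard]; ring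
          _ ≤ ((r : ℝ) - 1) * X ^ (1 / (1 + ε)) := by
              have : ((r - 1 : ℕ) : ℝ) ≤ (r : ℝ) - 1 := by
                push_cast [Nat.cast_sub hr]; ring_nf; simp
              exact mul_le_mul_of_nonneg_right this (Real.rpow_nonneg hX0.le _)
      have hZ : |zr| ≤ ((a : ℤ) + b) * (G * B ^ n) +
          ∑ i ∈ Finset.univ.erase (⟨r - 1, by omega⟩ : Fin r), |z i| := by
        refine habs.trans ?_
        have : |(a : ℤ) * U n + (b : ℤ) * U m| ≤ ((a : ℤ) + b) * (G * B ^ n) := by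
          exact_mod_cast hSbound
        linarith
      have habsR : X ≤ ((a : ℝ) + b) * ((G : ℝ) * (B : ℝ) ^ n) +
          ∑ i ∈ Finset.univ.erase (⟨r - 1, by omega⟩ : Fin r), ((|z i| : ℝ)) := by
        have h' := (Int.cast_le (R := ℝ)).mpr hZ
        push_cast at h'
        rw [hX]
        push_cast
        linarith [h']
      linarith [hsum2, habsR]
    -- use hcase : 2r ≤ X^(ε/(1+ε))
    have hhalf : ((r : ℝ) - 1) * X ^ (1 / (1 + ε)) ≤ X / 2 := by
      have hrX : (r : ℝ) - 1 ≤ X ^ (ε / (1 + ε)) / 2 := by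
        have : (r : ℝ) - 1 ≤ r := by linarith
        linarith
      have hmul : ((r : ℝ) - 1) * X ^ (1 / (1 + ε)) ≤
          (X ^ (ε / (1 + ε)) / 2) * X ^ (1 / (1 + ε)) :=
        mul_le_mul_of_nonneg_right hrX (Real.rpow_nonneg hX0.le _)
      refine hmul.trans ?_
      rw [div_mul_eq_mul_div, ← Real.rpow_add hX0]
      have : ε / (1 + ε) + 1 / (1 + ε) = 1 := by field_simp; ring
      rw [this, Real.rpow_one]
    have hX2 : X ≤ 2 * (((a : ℝ) + b) * ((G : ℝ) * (B : ℝ) ^ n)) := by linarith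
    have hfinal : Real.log X ≤ Real.log (2 * (a + b) * (G : ℝ)) + n * Real.log (B : ℝ) := by
      have h2 : Real.log X ≤ Real.log (2 * ((a : ℝ) + b) * (G : ℝ) * (B : ℝ) ^ n) := by
        apply Real.log_le_log hX0
        calc X ≤ 2 * (((a : ℝ) + b) * ((G : ℝ) * (B : ℝ) ^ n)) := hX2
          _ = 2 * ((a : ℝ) + b) * (G : ℝ) * (B : ℝ) ^ n := by ring
      rwa [Real.log_mul (by nlinarith) (by positivity), Real.log_pow] at h2
    calc Real.log X ≤ Real.log (2 * (a + b) * (G : ℝ)) + n * Real.log (B : ℝ) := hfinal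
      _ < Real.log (B : ℝ) * n +
          (Real.log (2 * (a + b) * (G : ℝ)) + ((1 + ε) / ε) * Real.log (2 * r) + 1) := by
        nlinarith [mul_nonneg hεfrac.le hlog2r]
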